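/- Let D be a probability distribution on ℝ, let η ~ D, ε ≥ 0, and δ = tv(D, D + ε) with δ > 0. Then E[|η|²] ≥ (ε²/200)·(1−δ)/δ². -/

import Mathlib

open MeasureTheory

/-- Total variation distance between two measures. -/
noncomputable def tv {α : Type*} [MeasurableSpace α] (P Q : Measure α) : ℝ :=
  ⨆ A : {s : Set α // MeasurableSet s}, |(P A.1).toReal - (Q A.1).toReal|

lemma tv_le_bound {α : Type*} [MeasurableSpace α] (P Q : Measure α)
    [IsProbabilityMeasure P] [IsProbabilityMeasure Q]
    {A : Set α} (hA : MeasurableSet A) :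
    |(P A).toReal - (Q A).toReal| ≤ tv P Q := by
  apply le_ciSup (f := fun A : {s : Set α // MeasurableSet s} =>
      |(P A.1).toReal - (Q A.1).toReal|) ?_ ⟨A, hA⟩
  refine ⟨2, ?_⟩
  rintro x ⟨B, rfl⟩
  have h1 : (P B.1).toReal ≤ 1 := by
    have h := prob_le_one (μ := P) (s := B.1)
    have := ENNReal.toReal_mono ENNReal.one_ne_top h
    simpa using this
  have h2 : (Q B.1).toReal ≤ 1 := by
    have h := prob_le_one (μ := Q) (s := B.1)
    have := ENNReal.toReal_mono ENNReal.one_ne_top h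
    simpa using this
  have h3 : 0 ≤ (P B.1).toReal := ENNReal.toReal_nonneg
  have h4 : 0 ≤ (Q B.1).toReal := ENNReal.toReal_nonneg
  rw [abs_le]; constructor <;> linarith

lemma shift_bound (D : Measure ℝ) [IsProbabilityMeasure D] (ε δ : ℝ)
    (hδ : δ = tv D (D.map (· + ε))) (k : ℕ) {A : Set ℝ} (hA : MeasurableSet A) :
    |(D A).toReal - (D ((fun x => x + (k : ℝ) * ε) ⁻¹' A)).toReal| ≤ k * δ := by
  have hmap : IsProbabilityMeasure (D.map (· + ε)) :=
    Measure.isProbabilityMeasure_map (measurable_add_const ε).aemeasurable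
  induction k generalizing A with
  | zero => simp
  | succ n ih =>
    set B : Set ℝ := (fun x => x + ε) ⁻¹' A with hBdef
    have hB : MeasurableSet B := (measurable_add_const ε) hA
    have h1 : |(D A).toReal - (D B).toReal| ≤ δ := by
      have := tv_le_bound D (D.map (· + ε)) hA
      rw [Measure.map_apply (measurable_add_const ε) hA] at this
      rw [hδ]
      simpa using this
    have h2 := ih hB
    have hset : (fun x : ℝ => x + ((n : ℕ) + 1 : ℕ) * ε) ⁻¹' A
        = (fun x : ℝ => x + (n : ℝ) * ε) ⁻¹' B := by
      ext x
      simp only [Set.mem_preimage, hBdef]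
      have : x + (((n : ℕ) + 1 : ℕ) : ℝ) * ε = x + (n : ℝ) * ε + ε := by push_cast; ring
      rw [this]
    rw [hset]
    have := abs_sub_le ((D A).toReal) ((D B).toReal)
      ((D ((fun x : ℝ => x + (n : ℝ) * ε) ⁻¹' B)).toReal)
    push_cast
    linarith

lemma conc (D : Measure ℝ) [IsProbabilityMeasure D] (ε δ : ℝ) (hε : 0 ≤ ε)
    (hδ : δ = tv D (D.map (· + ε))) (k : ℕ) :
    ENNReal.ofReal (((k : ℝ) * ε / 2) ^ 2 * (1 - (k : ℝ) * δ)) ≤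
      ∫⁻ x, ENNReal.ofReal (|x| ^ 2) ∂D := by
  set c : ℝ := (k : ℝ) * ε / 2 with hc
  have hc0 : 0 ≤ c := by positivity
  by_cases hk : 1 - (k : ℝ) * δ ≤ 0
  · have : c ^ 2 * (1 - (k : ℝ) * δ) ≤ 0 := mul_nonpos_of_nonneg_of_nonpos (sq_nonneg c) hk
    rw [ENNReal.ofReal_of_nonpos this]
    exact zero_le
  push_neg at hk
  -- the preimage of Ici c under shift by k*ε is Ici (-c)
  have hpre : (fun x : ℝ => x + (k : ℝ) * ε) ⁻¹' Set.Ici c = Set.Ici (-c) := by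
    ext x
    simp only [Set.mem_preimage, Set.mem_Ici]
    constructor <;> intro h <;> (rw [hc] at *; linarith)
  have hshift := shift_bound D ε δ hδ k (A := Set.Ici c) measurableSet_Ici
  rw [hpre] at hshift
  have h1 : (D (Set.Ici (-c))).toReal - (D (Set.Ici c)).toReal ≤ (k : ℝ) * δ := by
    have h := abs_le.mp hshift
    linarith [h.1]
  -- D (Ico (-c) c) ≤ k δ
  have hunion : Set.Ici (-c) = Set.Ico (-c) c ∪ Set.Ici c :=
    (Set.Ico_union_Ici_eq_Ici (by linarith)).symm
  have hdisj : Disjoint (Set.Ico (-c) c) (Set.Ici c) :=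
    (Set.Iio_disjoint_Ici le_rfl).mono_left Set.Ico_subset_Iio_self
  have hadd : D (Set.Ici (-c)) = D (Set.Ico (-c) c) + D (Set.Ici c) := by
    rw [hunion, measure_union hdisj measurableSet_Ici]
  have hfin : ∀ s : Set ℝ, D s ≠ ⊤ := fun s => measure_ne_top D s
  have haddR : (D (Set.Ici (-c))).toReal
      = (D (Set.Ico (-c) c)).toReal + (D (Set.Ici c)).toReal := by
    rw [hadd, ENNReal.toReal_add (hfin _) (hfin _)]
  have hIco : (D (Set.Ico (-c) c)).toReal ≤ (k : ℝ) * δ := by linarith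
  -- the far set
  set S : Set ℝ := {x : ℝ | c ≤ |x|} with hS
  have hSm : MeasurableSet S := by
    have : S = abs ⁻¹' Set.Ici c := rfl
    rw [this]
    exact measurable_abs measurableSet_Ici
  have hSc : Sᶜ ⊆ Set.Ico (-c) c := by
    intro x hx
    simp only [hS, Set.mem_compl_iff, Set.mem_setOf_eq, not_le] at hx
    have := abs_lt.mp hx
    exact ⟨le_of_lt this.1, this.2⟩
  have hScR : (D Sᶜ).toReal ≤ (k : ℝ) * δ := by
    refine le_trans ?_ hIco
    exact ENNReal.toReal_mono (hfin _) (measure_mono hSc)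
  have hSR : 1 - (k : ℝ) * δ ≤ (D S).toReal := by
    have hcompl : (D S).toReal = 1 - (D Sᶜ).toReal := by
      have := prob_compl_eq_one_sub (μ := D) hSm
      have h2 : (D Sᶜ).toReal = 1 - (D S).toReal := by
        rw [this, ENNReal.toReal_sub_of_le (prob_le_one) ENNReal.one_ne_top]
        simp
      linarith
    linarith
  -- lintegral bound
  have hle : ENNReal.ofReal (c ^ 2) * D S ≤ ∫⁻ x, ENNReal.ofReal (|x| ^ 2) ∂D := by
    have step1 : ENNReal.ofReal (c ^ 2) * D S = ∫⁻ _ in S, ENNReal.ofReal (c ^ 2) ∂D := by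
      rw [setLIntegral_const, mul_comm]
    have step2 : ∫⁻ x in S, ENNReal.ofReal (c ^ 2) ∂D
        ≤ ∫⁻ x in S, ENNReal.ofReal (|x| ^ 2) ∂D := by
      refine setLIntegral_mono (by fun_prop) ?_
      intro x hx
      exact ENNReal.ofReal_le_ofReal (by
        have : c ≤ |x| := hx
        nlinarith [abs_nonneg x])
    have step3 : ∫⁻ x in S, ENNReal.ofReal (|x| ^ 2) ∂D
        ≤ ∫⁻ x, ENNReal.ofReal (|x| ^ 2) ∂D := setLIntegral_le_lintegral _ _
    rw [step1]; exact le_trans step2 step3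
  refine le_trans ?_ hle
  rw [show c ^ 2 * (1 - (k : ℝ) * δ) = c ^ 2 * (1 - (k : ℝ) * δ) from rfl,
    ENNReal.ofReal_mul (sq_nonneg c)]
  refine mul_le_mul_right ?_ _
  exact ENNReal.ofReal_le_of_le_toReal hSR

theorem stmt3 (D : Measure ℝ) [IsProbabilityMeasure D] (ε δ : ℝ) (hε : 0 ≤ ε)
    (hδ : δ = tv D (D.map (· + ε))) (hpos : 0 < δ) :
    ENNReal.ofReal (ε ^ 2 / 200 * ((1 - δ) / δ ^ 2)) ≤
      ∫⁻ x, ENNReal.ofReal (|x| ^ 2) ∂D := by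
  by_cases h1δ : 1 - δ ≤ 0
  · have : ε ^ 2 / 200 * ((1 - δ) / δ ^ 2) ≤ 0 := by
      apply mul_nonpos_of_nonneg_of_nonpos (by positivity)
      exact div_nonpos_of_nonpos_of_nonneg h1δ (sq_nonneg δ)
    rw [ENNReal.ofReal_of_nonpos this]
    exact zero_le
  push_neg at h1δ
  by_cases hbig : 1 ≤ 50 * δ ^ 2
  · -- use k = 1
    refine le_trans ?_ (conc D ε δ hε hδ 1)
    apply ENNReal.ofReal_le_ofReal
    have key : (1 - δ) / δ ^ 2 ≤ 50 * (1 - δ) := by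
      rw [div_le_iff₀ (by positivity)]
      nlinarith
    calc ε ^ 2 / 200 * ((1 - δ) / δ ^ 2) ≤ ε ^ 2 / 200 * (50 * (1 - δ)) := by
          apply mul_le_mul_of_nonneg_left key (by positivity)
      _ = (((1 : ℕ) : ℝ) * ε / 2) ^ 2 * (1 - ((1 : ℕ) : ℝ) * δ) := by push_cast; ring
  · push_neg at hbig
    have hδsmall : δ < 0.15 := by nlinarith
    set k : ℕ := ⌊(0.9 : ℝ) / δ⌋₊ with hk
    have hdivpos : 0 < (0.9 : ℝ) / δ := by positivity
    have hk1 : (k : ℝ) ≤ 0.9 / δ := Nat.floor_le (le_of_lt hdivpos)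
    have hk2 : (0.9 : ℝ) / δ < (k : ℝ) + 1 := Nat.lt_floor_add_one _
    have ht1 : (k : ℝ) * δ ≤ 0.9 := by
      have := mul_le_mul_of_nonneg_right hk1 hpos.le
      rwa [div_mul_cancel₀] at this
      exact ne_of_gt hpos
    have ht2 : (0.75 : ℝ) ≤ (k : ℝ) * δ := by
      have := mul_lt_mul_of_pos_right hk2 hpos
      rw [div_mul_cancel₀ _ (ne_of_gt hpos)] at this
      nlinarith
    refine le_trans ?_ (conc D ε δ hε hδ k)
    apply ENNReal.ofReal_le_ofReal
    have h075 : (0:ℝ) ≤ (k : ℝ) * δ - 0.75 := by linarith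
    have h09 : (0:ℝ) ≤ 0.9 - (k : ℝ) * δ := by linarith
    have key : (1 - δ) / δ ^ 2 ≤ 50 * (k : ℝ) ^ 2 * (1 - (k : ℝ) * δ) := by
      rw [div_le_iff₀ (by positivity)]
      nlinarith [mul_nonneg h075 h09, mul_nonneg (mul_nonneg h075 h09) h075,
        mul_nonneg (mul_nonneg h075 h09) h09, hpos.le, sq_nonneg δ]
    calc ε ^ 2 / 200 * ((1 - δ) / δ ^ 2)
        ≤ ε ^ 2 / 200 * (50 * (k : ℝ) ^ 2 * (1 - (k : ℝ) * δ)) := by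
          apply mul_le_mul_of_nonneg_left key (by positivity)
      _ = ((k : ℝ) * ε / 2) ^ 2 * (1 - (k : ℝ) * δ) := by ring
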